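/- arXiv:1807.09983 — 3 statements merged into one kernel-verified Lean document; each statement's English description precedes it below -/
import Mathlib

section
/- Let G be a profinite group, P a closed normal pro-p Sylow subgroup of G such that G/P is the maximal pro-p' quotient. Then the extension 1 → P → G → G/P → 1 splits, i.e. there exists a closed subgroup H of G mapping isomorphically onto G/P. -/
/-- A compact (profinite) group is pro-`p` if every open subgroup has index a power of `p`. -/
def IsProPGroup (p : ℕ) (G : Type*) [Group G] [TopologicalSpace G] : Prop :=
  ∀ U : Subgroup G, IsOpen (U : Set G) → ∃ n : ℕ, U.index = p ^ n

/-- A compact (profinite) group has pro-order prime to `p` if no open subgroup has index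
divisible by `p`. -/
def IsProPrimeToP (p : ℕ) (G : Type*) [Group G] [TopologicalSpace G] : Prop :=
  ∀ U : Subgroup G, IsOpen (U : Set G) → ¬ p ∣ U.index

open Subgroup

private lemma sz_step
    {p : ℕ} (hp : p.Prime)
    {G : Type*} [Group G] [TopologicalSpace G] [IsTopologicalGroup G]
    [CompactSpace G] [T2Space G] [TotallyDisconnectedSpace G]
    (P : Subgroup G) [P.Normal] (hPc : IsClosed (P : Set G))
    (hPpro : IsProPGroup p P)
    (hquot : IsProPrimeToP p (G ⧸ P))
    (H : Subgroup G) (hHc : IsClosed (H : Set G))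
    (hHt : H.map (QuotientGroup.mk' P) = ⊤)
    (q₀ : G) (hq₀H : q₀ ∈ H) (hq₀P : q₀ ∈ P) (hq₀ : q₀ ≠ 1) :
    ∃ H' : Subgroup G, H' ≤ H ∧ IsClosed (H' : Set G) ∧
      H'.map (QuotientGroup.mk' P) = ⊤ ∧ q₀ ∉ H' := by
  haveI : IsClosed (P : Set G) := hPc
  set π := QuotientGroup.mk' P with hπ
  -- find an open normal subgroup N of G with q₀ ∉ N
  obtain ⟨V, ⟨h1V, hVclopen⟩, hVq⟩ :=
    (nhds_basis_clopen (1 : G)).mem_iff.mp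
      (IsOpen.mem_nhds (isOpen_compl_singleton (x := q₀)) (by simp [Ne.symm hq₀]))
  obtain ⟨N, hNV⟩ :=
    IsTopologicalGroup.exist_openNormalSubgroup_sub_clopen_nhds_of_one hVclopen h1V
  have hq₀N : q₀ ∉ N.toSubgroup := fun h => hVq (hNV h) rfl
  haveI : CompactSpace H := isCompact_iff_compactSpace.mp hHc.isCompact
  -- set up subgroups of ↥H
  set N' : Subgroup H := N.toSubgroup.subgroupOf H with hN'
  have hN'open : IsOpen (N' : Set H) := N.isOpen.preimage continuous_subtype_val
  haveI : Finite (H ⧸ N') := N'.quotient_finite_of_isOpen hN'open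
  set P' : Subgroup H := P.subgroupOf H with hP'
  set mkD := QuotientGroup.mk' N' with hmkD
  set QD : Subgroup (H ⧸ N') := P'.map mkD with hQD
  haveI : QD.Normal :=
    Subgroup.Normal.map inferInstance mkD (QuotientGroup.mk'_surjective N')
  -- card of QD is a power of p
  have hcard : ∃ k, Nat.card QD = p ^ k := by
    set NP : Subgroup P := N.toSubgroup.subgroupOf P with hNP
    have hNPopen : IsOpen (NP : Set P) := N.isOpen.preimage continuous_subtype_val
    obtain ⟨n, hn⟩ := hPpro NP hNPopen
    set ι : P' →* P := (H.subtype.comp P'.subtype).codRestrict P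
      (fun x => Subgroup.mem_subgroupOf.mp x.2) with hι
    set θ : P' →* (P ⧸ NP) := (QuotientGroup.mk' NP).comp ι with hθ
    have hkerθ : θ.ker = N'.subgroupOf P' := by
      ext x
      simp only [hθ, MonoidHom.mem_ker, MonoidHom.comp_apply, QuotientGroup.mk'_apply,
        QuotientGroup.eq_one_iff, hNP, mem_subgroupOf, hN']
      rfl
    have h1 : (N'.subgroupOf P').index = Nat.card θ.range := by
      rw [← hkerθ]; exact Subgroup.index_ker θ
    have hdvd : (N'.subgroupOf P').index ∣ p ^ n := by
      rw [h1, ← hn, Subgroup.index_eq_card]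
      exact Subgroup.card_subgroup_dvd_card θ.range
    have hcardQD : Nat.card QD = (N'.subgroupOf P').index := by
      have h2 := Subgroup.index_ker (mkD.domRestrict P')
      rw [MonoidHom.ker_domRestrict, MonoidHom.domRestrict_range] at h2
      rw [hQD, ← h2, hmkD, QuotientGroup.ker_mk']
    obtain ⟨k, -, hk⟩ := (Nat.dvd_prime_pow hp).mp (hcardQD ▸ hdvd)
    exact ⟨k, hk⟩
  -- index of QD is coprime to p
  have hindex : ¬ p ∣ QD.index := by
    set Wq : Subgroup (G ⧸ P) := (H ⊓ N.toSubgroup).map π with hWq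
    have hWqclosed : IsClosed (Wq : Set (G ⧸ P)) := by
      have hcl : IsClosed ((H ⊓ N.toSubgroup : Subgroup G) : Set G) := by
        rw [Subgroup.coe_inf]
        exact hHc.inter (N.toSubgroup.isClosed_of_isOpen N.isOpen)
      have hcpt : IsCompact (Wq : Set (G ⧸ P)) := by
        rw [hWq, Subgroup.coe_map]
        exact (hcl.isCompact.image continuous_quot_mk)
      exact hcpt.isClosed
    set φ : H →* (G ⧸ P) := π.comp H.subtype with hφ
    have hφrange : φ.range = ⊤ := by
      rw [hφ, MonoidHom.range_comp, Subgroup.range_subtype, hHt]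
    have hcomap : Wq.comap φ = P' ⊔ N' := by
      apply le_antisymm
      · intro x hx
        have hx' : π (x : G) ∈ Wq := hx
        obtain ⟨w, hw, hwx⟩ := Subgroup.mem_map.mp hx'
        have hu : w⁻¹ * (x : G) ∈ P := by
          have : π (w⁻¹ * (x : G)) = 1 := by
            rw [map_mul, map_inv, hwx]
            group
          exact (QuotientGroup.eq_one_iff _).mp this
        have hwH : w ∈ H := hw.1
        have hxeq : x = (⟨w, hwH⟩ : H) * ⟨w⁻¹ * (x : G), mul_mem (inv_mem hwH) x.2⟩ := by
          ext
          simp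
        rw [hxeq]
        exact mul_mem
          (Subgroup.mem_sup_right (mem_subgroupOf.mpr hw.2))
          (Subgroup.mem_sup_left (mem_subgroupOf.mpr hu))
      · rw [sup_le_iff]
        constructor
        · intro x hx
          have h1 : π (x : G) = 1 := (QuotientGroup.eq_one_iff _).mpr (mem_subgroupOf.mp hx)
          show φ x ∈ Wq
          rw [hφ, MonoidHom.comp_apply]
          show π (x : G) ∈ Wq
          rw [h1]
          exact one_mem Wq
        · intro x hx
          show φ x ∈ Wq
          show π (x : G) ∈ Wq
          exact Subgroup.mem_map.mpr ⟨x, ⟨x.2, mem_subgroupOf.mp hx⟩, rfl⟩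
    have hQDindex : QD.index = Wq.index := by
      have h2 : QD.index = (P' ⊔ N').index := by
        rw [hQD, Subgroup.index_map, hmkD, QuotientGroup.ker_mk',
          MonoidHom.range_eq_top_of_surjective _ (QuotientGroup.mk'_surjective N'),
          Subgroup.index_top, mul_one]
      have h3 := Subgroup.index_comap Wq φ
      rw [hcomap, hφrange, Subgroup.relIndex_top_right] at h3
      rw [h2, h3]
    haveI : Finite ((H ⧸ N') ⧸ QD) := Quotient.finite _
    haveI : Wq.FiniteIndex := ⟨by rw [← hQDindex]; exact Subgroup.index_ne_zero_of_finite⟩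
    have hWqopen : IsOpen (Wq : Set (G ⧸ P)) :=
      Subgroup.isOpen_of_isClosed_of_finiteIndex Wq hWqclosed
    rw [hQDindex]
    exact hquot Wq hWqopen
  obtain ⟨k, hk⟩ := hcard
  have hcop : Nat.Coprime (Nat.card QD) QD.index := by
    rw [hk]
    exact Nat.Coprime.pow_left k (hp.coprime_iff_not_dvd.mpr hindex)
  obtain ⟨K', hK'⟩ := Subgroup.exists_right_complement'_of_coprime hcop
  set KH : Subgroup H := K'.comap mkD with hKH
  have hN'KH : N' ≤ KH := by
    intro x hx
    rw [hKH, Subgroup.mem_comap]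
    have : mkD x = 1 := (QuotientGroup.eq_one_iff _).mpr hx
    rw [this]
    exact one_mem K'
  refine ⟨KH.map H.subtype, map_subtype_le KH, ?_, ?_, ?_⟩
  · have hKHopen : IsOpen (KH : Set H) := Subgroup.isOpen_mono hN'KH hN'open
    have h1 : IsCompact (KH : Set H) := (KH.isClosed_of_isOpen hKHopen).isCompact
    have h2 : IsCompact ((KH.map H.subtype : Subgroup G) : Set G) := by
      rw [Subgroup.coe_map]
      exact h1.image continuous_subtype_val
    exact h2.isClosed
  · rw [eq_top_iff]
    intro z _
    obtain ⟨h, hh, hhz⟩ := Subgroup.mem_map.mp (hHt ▸ Subgroup.mem_top z)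
    obtain ⟨⟨a, b⟩, hab, -⟩ := hK'.existsUnique (mkD ⟨h, hh⟩)
    obtain ⟨q, hqP', hqa⟩ := Subgroup.mem_map.mp a.2
    have hg' : q⁻¹ * ⟨h, hh⟩ ∈ KH := by
      rw [hKH, Subgroup.mem_comap]
      have : mkD (q⁻¹ * ⟨h, hh⟩) = (b : H ⧸ N') := by
        rw [map_mul, map_inv, hqa, ← hab]
        group
      rw [this]
      exact b.2
    refine Subgroup.mem_map.mpr ⟨((q⁻¹ * ⟨h, hh⟩ : H) : G), ?_, ?_⟩
    · exact Subgroup.mem_map_of_mem H.subtype hg'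
    · have hq1 : π ((q : H) : G) = 1 := (QuotientGroup.eq_one_iff _).mpr (mem_subgroupOf.mp hqP')
      show π _ = z
      push_cast
      rw [map_mul, map_inv, hq1, inv_one, one_mul, hhz]
  · intro hq
    obtain ⟨x, hxKH, hxval⟩ := Subgroup.mem_map.mp hq
    have hx : x = ⟨q₀, hq₀H⟩ := Subtype.ext hxval
    rw [hx] at hxKH
    have h1 : mkD ⟨q₀, hq₀H⟩ ∈ K' := hxKH
    have h2 : mkD ⟨q₀, hq₀H⟩ ∈ QD :=
      Subgroup.mem_map_of_mem mkD (mem_subgroupOf.mpr hq₀P)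
    have h3 := hK'.disjoint.le_bot (⟨h2, h1⟩ : mkD ⟨q₀, hq₀H⟩ ∈ QD ⊓ K')
    rw [Subgroup.mem_bot] at h3
    have h4 : (⟨q₀, hq₀H⟩ : H) ∈ N' := (QuotientGroup.eq_one_iff _).mp h3
    exact hq₀N (mem_subgroupOf.mp h4)

/-- Profinite Schur–Zassenhaus: if `G` is a profinite group, `P` a closed normal pro-`p`
subgroup such that `G/P` has pro-order prime to `p`, then the extension
`1 → P → G → G/P → 1` splits: there is a closed subgroup `H` of `G` mapping
isomorphically (bijectively, via the quotient map) onto `G/P`. -/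
theorem profinite_schur_zassenhaus
    (p : ℕ) (hp : p.Prime)
    (G : Type*) [Group G] [TopologicalSpace G] [IsTopologicalGroup G]
    [CompactSpace G] [T2Space G] [TotallyDisconnectedSpace G]
    (P : Subgroup G) [P.Normal] (hPc : IsClosed (P : Set G))
    (hPpro : IsProPGroup p P)
    (hquot : IsProPrimeToP p (G ⧸ P)) :
    ∃ H : Subgroup G, IsClosed (H : Set G) ∧
      Function.Bijective (fun h : H => QuotientGroup.mk (s := P) (h : G)) := by
  haveI : IsClosed (P : Set G) := hPc
  haveI hT1 : T1Space (G ⧸ P) := inferInstance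
  set π := QuotientGroup.mk' P with hπ
  set S : Set (Set G) :=
    {s | ∃ K : Subgroup G, (K : Set G) = s ∧ IsClosed s ∧ K.map π = ⊤} with hS
  have htopS : (Set.univ : Set G) ∈ S := by
    refine ⟨⊤, by simp, isClosed_univ, ?_⟩
    rw [← MonoidHom.range_eq_map]
    exact MonoidHom.range_eq_top_of_surjective _ (QuotientGroup.mk'_surjective P)
  have hchain : ∀ c ⊆ S, IsChain (· ⊆ ·) c → c.Nonempty →
      ∃ lb ∈ S, ∀ s ∈ c, lb ⊆ s := by
    intro c hcS hchain hcne
    set T : Set (Subgroup G) := {K | (K : Set G) ∈ c} with hT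
    set Kinf := sInf T with hK
    have hKc : ∀ s ∈ c, (Kinf : Set G) ⊆ s := by
      intro s hs
      obtain ⟨K, hKs, -, -⟩ := hcS hs
      have h1 : Kinf ≤ K := sInf_le (show (K : Set G) ∈ c by rw [hKs]; exact hs)
      rw [← hKs]
      exact h1
    refine ⟨(Kinf : Set G), ⟨Kinf, rfl, ?_, ?_⟩, hKc⟩
    · rw [hK, Subgroup.coe_sInf]
      refine isClosed_biInter ?_
      intro K hKmem
      obtain ⟨K', hK', hcl, -⟩ := hcS hKmem
      exact hcl
    · rw [eq_top_iff]
      intro z _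
      haveI hne : Nonempty c := hcne.to_subtype
      set t : c → Set G := fun s => ((s : Set G) ∩ (π ⁻¹' {z})) with ht
      have hdir : Directed (· ⊇ ·) t := by
        intro s₁ s₂
        rcases hchain.total s₁.2 s₂.2 with h | h
        · exact ⟨s₁, subset_rfl, Set.inter_subset_inter_left _ h⟩
        · exact ⟨s₂, Set.inter_subset_inter_left _ h, subset_rfl⟩
      have hnonempty : ∀ s : c, (t s).Nonempty := by
        intro s
        obtain ⟨K, hKs, -, hKtop⟩ := hcS s.2
        obtain ⟨g, hg, hgz⟩ := Subgroup.mem_map.mp (hKtop ▸ Subgroup.mem_top z)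
        exact ⟨g, ⟨hKs ▸ hg, hgz⟩⟩
      have hclosed : ∀ s : c, IsClosed (t s) := by
        intro s
        obtain ⟨K, hKs, hcl, -⟩ := hcS s.2
        exact hcl.inter (isClosed_singleton.preimage QuotientGroup.continuous_mk)
      have hcompact : ∀ s : c, IsCompact (t s) := fun s => (hclosed s).isCompact
      obtain ⟨g, hg⟩ :=
        IsCompact.nonempty_iInter_of_directed_nonempty_isCompact_isClosed
          t hdir hnonempty hcompact hclosed
      simp only [Set.mem_iInter] at hg
      have hgK : g ∈ Kinf := by
        rw [hK]
        refine Subgroup.mem_sInf.mpr ?_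
        intro K hKmem
        exact (hg ⟨(K : Set G), hKmem⟩).1
      have hgz : π g = z := (hg ⟨hcne.choose, hcne.choose_spec⟩).2
      exact Subgroup.mem_map.mpr ⟨g, hgK, hgz⟩
  obtain ⟨m, -, hmin⟩ := zorn_superset_nonempty S hchain Set.univ htopS
  obtain ⟨K₀, hK₀m, hK₀cl, hK₀top⟩ := hmin.prop
  have hK₀closed : IsClosed (K₀ : Set G) := by rw [hK₀m]; exact hK₀cl
  have hbot : K₀ ⊓ P = ⊥ := by
    by_contra hne
    obtain ⟨q₀, hq₀, hq₀1⟩ : ∃ x ∈ K₀ ⊓ P, x ≠ 1 := by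
      by_contra h
      push_neg at h
      exact hne ((Subgroup.eq_bot_iff_forall _).mpr h)
    obtain ⟨H', hH'le, hH'cl, hH'top, hH'q⟩ :=
      sz_step hp P hPc hPpro hquot K₀ hK₀closed hK₀top q₀ hq₀.1 hq₀.2 hq₀1
    have hmem : (H' : Set G) ∈ S := ⟨H', rfl, hH'cl, hH'top⟩
    have hsub : (H' : Set G) ⊆ m := by
      rw [← hK₀m]
      exact hH'le
    have : m ⊆ (H' : Set G) := hmin.le_of_le hmem hsub
    exact hH'q (this (by rw [← hK₀m]; exact hq₀.1))
  refine ⟨K₀, hK₀closed, ?_, ?_⟩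
  · intro h₁ h₂ heq
    have h1 : (h₁ : G)⁻¹ * (h₂ : G) ∈ P := QuotientGroup.eq.mp heq
    have h2 : (h₁ : G)⁻¹ * (h₂ : G) ∈ K₀ ⊓ P := ⟨K₀.mul_mem (K₀.inv_mem h₁.2) h₂.2, h1⟩
    rw [hbot, Subgroup.mem_bot] at h2
    exact Subtype.ext (by rw [← inv_mul_eq_one]; exact h2)
  · intro z
    obtain ⟨g, hg, hgz⟩ := Subgroup.mem_map.mp (hK₀top ▸ Subgroup.mem_top z)
    exact ⟨⟨g, hg⟩, hgz⟩
end

section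
/- Let G be a group, N a normal subgroup of finite index r, and χ : N → K* a one-dimensional character over a field K. Then the determinant of the induced representation Ind_N^G χ equals ε · (χ ∘ V), where ε is the sign character of the permutation action of G on G/N and V : G → N^{ab} is the transfer map. -/
open scoped Classical

/-- The monomial matrix of the induced representation `Ind_N^G χ` of a one-dimensional
character `χ : N → Kˣ`, in the model with basis indexed by `G/N` (using the transversal
given by `Quotient.out`). -/
noncomputable def inducedMatrix {G : Type*} [Group G] (N : Subgroup G)
    {K : Type*} [Field K] (χ : N →* Kˣ) (g : G) :
    Matrix (G ⧸ N) (G ⧸ N) K := fun x y =>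
  if h : g • y = x then
    (χ ⟨(Quotient.out x)⁻¹ * g * Quotient.out y, by
      have h1 : (QuotientGroup.mk (Quotient.out x) : G ⧸ N) =
          QuotientGroup.mk (g * Quotient.out y) := by
        rw [QuotientGroup.out_eq', ← h]
        conv_lhs => rw [← QuotientGroup.out_eq' y]
        rfl
      simpa [mul_assoc] using QuotientGroup.eq.mp h1⟩ : K)
  else 0

section Aux
open Subgroup Subgroup.leftTransversals MulAction

theorem mem_aux {G : Type*} [Group G] (N : Subgroup G) (g : G) (q : G ⧸ N) :
    (Quotient.out q)⁻¹ * g * Quotient.out ((g⁻¹ : G) • q) ∈ N := by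
  have h1 : (QuotientGroup.mk (Quotient.out q) : G ⧸ N) =
      QuotientGroup.mk (g * Quotient.out ((g⁻¹ : G) • q)) := by
    rw [QuotientGroup.out_eq']
    conv_rhs => rw [show (QuotientGroup.mk (g * Quotient.out ((g⁻¹:G) • q)) : G ⧸ N)
      = g • (QuotientGroup.mk (Quotient.out ((g⁻¹:G) • q))) from rfl]
    rw [QuotientGroup.out_eq', smul_inv_smul]
  simpa [mul_assoc] using QuotientGroup.eq.mp h1

theorem transfer_prod {G : Type*} [Group G] (N : Subgroup G) [N.FiniteIndex]
    [Fintype (G ⧸ N)] {A : Type*} [CommGroup A] (χ : N →* A) (g : G) :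
    MonoidHom.transfer χ g =
      ∏ q : G ⧸ N, χ ⟨(Quotient.out q)⁻¹ * g * Quotient.out ((g⁻¹ : G) • q), mem_aux N g q⟩ := by
  let T : N.LeftTransversal := default
  rw [MonoidHom.transfer_def χ T g, Subgroup.leftTransversals.diff]
  have hT : (N.fintypeQuotientOfFiniteIndex : Fintype (G ⧸ N)) = ‹_› := Subsingleton.elim _ _
  congr 1
  · exact hT ▸ rfl
  funext q
  congr 1
  refine Subtype.ext ?_
  dsimp only
  have hα : ∀ p : G ⧸ N, ((T.2.leftQuotientEquiv p : G)) = Quotient.out p := fun p =>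
    Subgroup.IsComplement.leftQuotientEquiv_apply Quotient.out_eq' p
  rw [smul_apply_eq_smul_apply_inv_smul g T q, hα, hα]
  rw [smul_eq_mul, mul_assoc]

end Aux

/-- Determinant of an induced representation: for `N ⊴ G` of finite index and a character
`χ : N → Kˣ`, the determinant of `Ind_N^G χ` at `g` is the sign `ε(g)` of the permutation
of `G/N` induced by `g`, times `χ` composed with the transfer map `V : G → N^{ab}`. -/
theorem det_induced_eq_sign_mul_transfer
    {G : Type*} [Group G] (N : Subgroup G) [N.Normal] [N.FiniteIndex]
    [Fintype (G ⧸ N)] [DecidableEq (G ⧸ N)]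
    {K : Type*} [Field K] [CharZero K] (χ : N →* Kˣ) (g : G) :
    (inducedMatrix N χ g).det =
      ((Equiv.Perm.sign (MulAction.toPermHom G (G ⧸ N) g) : ℤ) : K) *
        ((MonoidHom.transfer χ g : Kˣ) : K) := by
  set σ : Equiv.Perm (G ⧸ N) := MulAction.toPermHom G (G ⧸ N) g with hσ
  set d : (G ⧸ N) → K := fun y =>
    ((χ ⟨(Quotient.out (g • y))⁻¹ * g * Quotient.out y, by
      simpa using mem_aux N g (g • y)⟩ : Kˣ) : K) with hd
  have hM : inducedMatrix N χ g = (σ⁻¹).permMatrix K * Matrix.diagonal d := by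
    ext x y
    rw [Matrix.mul_diagonal]
    by_cases h : g • y = x
    · subst h
      have hσy : σ⁻¹ (g • y) = y := by
        rw [Equiv.Perm.inv_def, Equiv.symm_apply_eq]; rfl
      rw [Equiv.Perm.permMatrix, PEquiv.toMatrix_apply, Equiv.toPEquiv_apply, hσy]
      simp only [Option.mem_def, Option.some.injEq, if_pos rfl, one_mul]
      rw [inducedMatrix, dif_pos rfl]
      simp [hd]
    · have hσy : σ⁻¹ x ≠ y := by
        intro hc
        apply h
        rw [← hc]
        exact σ.apply_symm_apply x
      rw [Equiv.Perm.permMatrix, PEquiv.toMatrix_apply, Equiv.toPEquiv_apply]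
      simp only [Option.mem_def, Option.some.injEq]
      rw [if_neg hσy, zero_mul]
      rw [inducedMatrix, dif_neg h]
  rw [hM, Matrix.det_mul, Matrix.det_permutation, Matrix.det_diagonal, Equiv.Perm.sign_inv]
  congr 1
  rw [transfer_prod, ← Units.coeHom_apply, map_prod]
  refine Fintype.prod_equiv (MulAction.toPerm g) _ _ fun y => ?_
  exact congrArg (fun z : N => ((χ z : Kˣ) : K)) (Subtype.ext (by simp))
end

section
/- Let G be a group, H a subgroup of finite index, and χ : H → K* a one-dimensional character with K a field. For any finite-dimensional representation W of G, Ind_H^G(χ ⊗ Res_H^G W) ≅ (Ind_H^G χ) ⊗ W. -/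
open scoped TensorProduct

section Induced

variable {G : Type*} [Group G] (H : Subgroup G)
variable {K : Type*} [Field K] (χ : H →* Kˣ)
variable {W : Type*} [AddCommGroup W] [Module K W]

/-- Model for the induced representation `Ind_H^G χ` of a one-dimensional character
`χ : H → Kˣ`: functions `f : G → K` with `f (g h) = χ(h)⁻¹ • f g`. -/
def indCharSpace : Submodule K (G → K) where
  carrier := {f | ∀ (g : G) (h : H), f (g * h) = ((χ h)⁻¹ : Kˣ) • f g}
  add_mem' := by
    intro a b ha hb g h
    simp [ha g h, hb g h, smul_add]
  zero_mem' := by intro g h; simp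
  smul_mem' := by
    intro c a ha g h
    simp only [Pi.smul_apply, ha g h]
    rw [smul_comm]

/-- Model for `Ind_H^G (χ ⊗ Res_H^G W)` for a representation `ρW` of `G` on `W`:
functions `f : G → W` with `f (g h) = χ(h)⁻¹ • ρW(h)⁻¹ (f g)`. -/
def indTwistSpace (ρW : Representation K G W) : Submodule K (G → W) where
  carrier := {f | ∀ (g : G) (h : H), f (g * h) = ((χ h)⁻¹ : Kˣ) • ρW ((h : G)⁻¹) (f g)}
  add_mem' := by
    intro a b ha hb g h
    simp [ha g h, hb g h, smul_add]
  zero_mem' := by intro g h; simp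
  smul_mem' := by
    intro c a ha g h
    simp only [Pi.smul_apply, ha g h, map_smul]
    rw [smul_comm]

/-- The `G`-action (by left translation) on the model of `Ind_H^G χ`. -/
def indCharAction (g₀ : G) : indCharSpace H χ →ₗ[K] indCharSpace H χ where
  toFun f := ⟨fun x => (f : G → K) (g₀⁻¹ * x), by
    intro g h
    show (f : G → K) (g₀⁻¹ * (g * h)) = _
    rw [← mul_assoc]
    exact f.2 (g₀⁻¹ * g) h⟩
  map_add' := by intro a b; ext x; rfl
  map_smul' := by intro c a; ext x; rfl

/-- The `G`-action (by left translation) on the model of `Ind_H^G (χ ⊗ Res_H^G W)`. -/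
def indTwistAction (ρW : Representation K G W) (g₀ : G) :
    indTwistSpace H χ ρW →ₗ[K] indTwistSpace H χ ρW where
  toFun f := ⟨fun x => (f : G → W) (g₀⁻¹ * x), by
    intro g h
    show (f : G → W) (g₀⁻¹ * (g * h)) = _
    rw [← mul_assoc]
    exact f.2 (g₀⁻¹ * g) h⟩
  map_add' := by intro a b; ext x; rfl
  map_smul' := by intro c a; ext x; rfl

end Induced

section Aux

variable {G : Type*} [Group G] (H : Subgroup G)
variable {K : Type*} [Field K] (χ : H →* Kˣ)
variable {W : Type*} [AddCommGroup W] [Module K W]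

/-- The `H`-component of `g` relative to the representative `(⟦g⟧).out`. -/
noncomputable def omegaH (g : G) : H :=
  ⟨((QuotientGroup.mk g : G ⧸ H)).out⁻¹ * g, by
    rw [← QuotientGroup.eq]
    exact QuotientGroup.out_eq' _⟩

lemma omegaH_spec (g : G) :
    ((QuotientGroup.mk g : G ⧸ H)).out * (omegaH H g : G) = g := by
  simp [omegaH]

lemma omegaH_mul (g : G) (h : H) : omegaH H (g * h) = omegaH H g * h := by
  have hq : (QuotientGroup.mk (g * h) : G ⧸ H) = QuotientGroup.mk g :=
    QuotientGroup.mk_mul_of_mem g h.2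
  ext
  simp [omegaH, hq, mul_assoc]

variable [DecidableEq (G ⧸ H)]

/-- Basis-type element of the induced character space supported on the coset `q`. -/
noncomputable def eBasis (q : G ⧸ H) : indCharSpace H χ :=
  ⟨fun g => if (QuotientGroup.mk g : G ⧸ H) = q then ((χ (omegaH H g))⁻¹ : Kˣ) • (1 : K) else 0, by
    intro g h
    have hq : (QuotientGroup.mk (g * h) : G ⧸ H) = QuotientGroup.mk g :=
      QuotientGroup.mk_mul_of_mem g h.2
    show (if (QuotientGroup.mk (g * h) : G ⧸ H) = q
        then ((χ (omegaH H (g * h)))⁻¹ : Kˣ) • (1 : K) else 0)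
      = ((χ h)⁻¹ : Kˣ) • (if (QuotientGroup.mk g : G ⧸ H) = q
        then ((χ (omegaH H g))⁻¹ : Kˣ) • (1 : K) else 0)
    by_cases hg : (QuotientGroup.mk g : G ⧸ H) = q
    · rw [if_pos (hq.trans hg), if_pos hg, omegaH_mul, map_mul, mul_inv, smul_smul,
        mul_comm ((χ (omegaH H g))⁻¹ : Kˣ) ((χ h)⁻¹ : Kˣ)]
    · simp [hq, hg]⟩

lemma eBasis_apply (q : G ⧸ H) (g : G) :
    ((eBasis H χ q : indCharSpace H χ) : G → K) g =
      if (QuotientGroup.mk g : G ⧸ H) = q then ((χ (omegaH H g))⁻¹ : Kˣ) • (1 : K) else 0 := rfl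

/-- The map `(Ind χ) ⊗ W → Ind (χ ⊗ Res W)`, `φ ⊗ w ↦ (g ↦ φ g • ρW g⁻¹ w)`. -/
noncomputable def projPhi (ρW : Representation K G W) :
    (indCharSpace H χ ⊗[K] W) →ₗ[K] indTwistSpace H χ ρW :=
  TensorProduct.lift
  { toFun := fun φ =>
    { toFun := fun w => ⟨fun g => (φ : G → K) g • ρW g⁻¹ w, by
        intro g h
        show (φ : G → K) (g * h) • ρW (g * h)⁻¹ w = _
        rw [φ.2 g h, mul_inv_rev, map_mul]
        simp only [Module.End.mul_apply, smul_assoc, map_smul]⟩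
      map_add' := fun a b => Subtype.ext <| funext fun g => by
        show (φ : G → K) g • ρW g⁻¹ (a + b) = _
        simp [smul_add]
      map_smul' := fun c a => Subtype.ext <| funext fun g => by
        show (φ : G → K) g • ρW g⁻¹ (c • a) = _
        rw [map_smul]
        exact smul_comm _ _ _ }
    map_add' := fun a b => LinearMap.ext fun w => Subtype.ext <| funext fun g => by
      show ((a : G → K) g + (b : G → K) g) • ρW g⁻¹ w = _
      simp [add_smul]
    map_smul' := fun c a => LinearMap.ext fun w => Subtype.ext <| funext fun g => by
      show (c • (a : G → K) g) • ρW g⁻¹ w = _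
      simp [mul_smul] }

lemma projPhi_tmul (ρW : Representation K G W) (φ : indCharSpace H χ) (w : W) (g : G) :
    ((projPhi H χ ρW (φ ⊗ₜ[K] w) : indTwistSpace H χ ρW) : G → W) g
      = (φ : G → K) g • ρW g⁻¹ w := rfl

variable [Fintype (G ⧸ H)]

/-- The inverse map `Ind (χ ⊗ Res W) → (Ind χ) ⊗ W`. -/
noncomputable def projPsi (ρW : Representation K G W) :
    indTwistSpace H χ ρW →ₗ[K] (indCharSpace H χ ⊗[K] W) where
  toFun f := ∑ q : G ⧸ H, eBasis H χ q ⊗ₜ[K] ρW q.out ((f : G → W) q.out)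
  map_add' a b := by
    simp only [Submodule.coe_add, Pi.add_apply, map_add, TensorProduct.tmul_add]
    rw [Finset.sum_add_distrib]
  map_smul' c a := by
    simp only [SetLike.val_smul, Pi.smul_apply, map_smul, TensorProduct.tmul_smul,
      RingHom.id_apply, ← Finset.smul_sum]

lemma phi_psi (ρW : Representation K G W) :
    (projPhi H χ ρW).comp (projPsi H χ ρW) = LinearMap.id := by
  ext f g
  show ((projPhi H χ ρW (∑ q : G ⧸ H, eBasis H χ q ⊗ₜ[K] ρW q.out ((f : G → W) q.out))
    : indTwistSpace H χ ρW) : G → W) g = (f : G → W) g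
  rw [map_sum]
  have : ((↑(∑ q : G ⧸ H, projPhi H χ ρW (eBasis H χ q ⊗ₜ[K] ρW q.out ((f : G → W) q.out)))
      : G → W) g)
      = ∑ q : G ⧸ H, ((projPhi H χ ρW (eBasis H χ q ⊗ₜ[K] ρW q.out ((f : G → W) q.out))
        : indTwistSpace H χ ρW) : G → W) g := by
    rw [Submodule.coe_sum, Finset.sum_apply]
  rw [this]
  have hsum : ∀ q : G ⧸ H, q ≠ (QuotientGroup.mk g : G ⧸ H) →
      ((projPhi H χ ρW (eBasis H χ q ⊗ₜ[K] ρW q.out ((f : G → W) q.out))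
        : indTwistSpace H χ ρW) : G → W) g = 0 := by
    intro q hq
    rw [projPhi_tmul, eBasis_apply, if_neg (Ne.symm hq), zero_smul]
  rw [Finset.sum_eq_single _ (fun q _ hq => hsum q hq) (by simp)]
  rw [projPhi_tmul, eBasis_apply, if_pos rfl]
  set q : G ⧸ H := QuotientGroup.mk g
  have hg : q.out * (omegaH H g : G) = g := omegaH_spec H g
  have := f.2 q.out (omegaH H g)
  rw [hg] at this
  rw [this]
  have h2 : g⁻¹ * Quotient.out q = ((omegaH H g : G))⁻¹ := by
    conv_lhs => rw [← hg]
    group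
  rw [← Module.End.mul_apply, ← map_mul, h2]
  simp [Units.smul_def]

lemma psi_phi (ρW : Representation K G W) :
    (projPsi H χ ρW).comp (projPhi H χ ρW) = LinearMap.id := by
  apply TensorProduct.ext'
  intro φ w
  show projPsi H χ ρW (projPhi H χ ρW (φ ⊗ₜ[K] w)) = φ ⊗ₜ[K] w
  show (∑ q : G ⧸ H, eBasis H χ q ⊗ₜ[K]
      ρW q.out (((projPhi H χ ρW (φ ⊗ₜ[K] w) : indTwistSpace H χ ρW) : G → W) q.out))
    = φ ⊗ₜ[K] w
  have h1 : ∀ q : G ⧸ H,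
      ρW q.out (((projPhi H χ ρW (φ ⊗ₜ[K] w) : indTwistSpace H χ ρW) : G → W) q.out)
        = (φ : G → K) q.out • w := by
    intro q
    rw [projPhi_tmul, map_smul, ← Module.End.mul_apply, ← map_mul, mul_inv_cancel, map_one,
      Module.End.one_apply]
  simp only [h1, TensorProduct.tmul_smul, TensorProduct.smul_tmul']
  rw [← TensorProduct.sum_tmul]
  congr 1
  apply Subtype.ext
  funext g
  have : ((↑(∑ q : G ⧸ H, (φ : G → K) q.out • eBasis H χ q) : G → K) g)
      = ∑ q : G ⧸ H, (φ : G → K) q.out • ((eBasis H χ q : indCharSpace H χ) : G → K) g := by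
    rw [Submodule.coe_sum, Finset.sum_apply]
    simp only [SetLike.val_smul, Pi.smul_apply]
  rw [this]
  have hz : ∀ q : G ⧸ H, q ≠ (QuotientGroup.mk g : G ⧸ H) →
      (φ : G → K) q.out • ((eBasis H χ q : indCharSpace H χ) : G → K) g = 0 := by
    intro q hq
    rw [eBasis_apply, if_neg (Ne.symm hq), smul_zero]
  rw [Finset.sum_eq_single _ (fun q _ hq => hz q hq) (by simp)]
  rw [eBasis_apply, if_pos rfl]
  set q : G ⧸ H := QuotientGroup.mk g
  have hg : q.out * (omegaH H g : G) = g := omegaH_spec H g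
  have := φ.2 q.out (omegaH H g)
  rw [hg] at this
  rw [this]
  simp only [smul_eq_mul, Units.smul_def, mul_one]
  ring

lemma phi_equivariant (ρW : Representation K G W) (g₀ : G) :
    (projPhi H χ ρW).comp
        (TensorProduct.map (indCharAction H χ g₀) (ρW g₀))
      = (indTwistAction H χ ρW g₀).comp (projPhi H χ ρW) :=
  TensorProduct.ext' fun φ w => Subtype.ext <| funext fun g => by
    show (φ : G → K) (g₀⁻¹ * g) • ρW g⁻¹ (ρW g₀ w)
      = (φ : G → K) (g₀⁻¹ * g) • ρW (g₀⁻¹ * g)⁻¹ w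
    rw [← Module.End.mul_apply, ← map_mul, mul_inv_rev, inv_inv]

end Aux


/-- Projection formula for induced representations: for `H ≤ G` of finite index, a
character `χ : H → Kˣ` and a finite-dimensional `K`-linear representation `ρW` of `G` on
`W`, there is an isomorphism of representations
`Ind_H^G (χ ⊗ Res_H^G W) ≅ (Ind_H^G χ) ⊗ W`. -/
theorem projection_formula_induced
    {G : Type*} [Group G] (H : Subgroup G) [H.FiniteIndex]
    {K : Type*} [Field K] (χ : H →* Kˣ)
    {W : Type*} [AddCommGroup W] [Module K W] [FiniteDimensional K W]
    (ρW : Representation K G W) :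
    ∃ e : indTwistSpace H χ ρW ≃ₗ[K] (indCharSpace H χ ⊗[K] W),
      ∀ (g : G) (f : indTwistSpace H χ ρW),
        e (indTwistAction H χ ρW g f) =
          TensorProduct.map (indCharAction H χ g) (ρW g) (e f) := by
  classical
  haveI : Fintype (G ⧸ H) := Fintype.ofFinite _
  refine ⟨LinearEquiv.ofLinear (projPsi H χ ρW) (projPhi H χ ρW)
    (psi_phi H χ ρW) (phi_psi H χ ρW), ?_⟩
  intro g f
  have h1 := congrArg (fun L : _ →ₗ[K] _ => L (projPsi H χ ρW f)) (phi_equivariant H χ ρW g)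
  simp only [LinearMap.comp_apply] at h1
  have h2 : projPhi H χ ρW (projPsi H χ ρW f) = f :=
    congrArg (fun L : _ →ₗ[K] _ => L f) (phi_psi H χ ρW)
  rw [h2] at h1
  have h3 := congrArg (projPsi H χ ρW) h1
  have h4 : ∀ x, projPsi H χ ρW (projPhi H χ ρW x) = x :=
    fun x => congrArg (fun L : _ →ₗ[K] _ => L x) (psi_phi H χ ρW)
  rw [h4] at h3
  show projPsi H χ ρW (indTwistAction H χ ρW g f)
    = TensorProduct.map (indCharAction H χ g) (ρW g) (projPsi H χ ρW f)
  rw [← h3]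
end
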